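/- arXiv:1202.5561 — 4 statements merged into one kernel-verified Lean document; each statement's English description precedes it below -/
import Mathlib

section
/- Let A and B be n×n real symmetric positive semidefinite matrices with A - B positive semidefinite. Then 0 ≤ det(A - B) ≤ ((det A)^{1/n} - (det B)^{1/n})^n. -/
open Matrix Finset

lemma key_scalar (n : ℕ) (hn : 0 < n) (x : Fin n → ℝ) (h0 : ∀ i, 0 ≤ x i)
    (h1 : ∀ i, x i ≤ 1) :
    (∏ i, x i) ^ (1 / (n : ℝ)) + (∏ i, (1 - x i)) ^ (1 / (n : ℝ)) ≤ 1 := by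
  have hn' : (n : ℝ) ≠ 0 := Nat.cast_ne_zero.mpr hn.ne'
  have hw : ∀ i ∈ (univ : Finset (Fin n)), (0:ℝ) ≤ 1 / (n:ℝ) := fun _ _ => by positivity
  have hw' : ∑ _i : Fin n, (1 / (n:ℝ)) = 1 := by
    simp [Finset.sum_const, hn']
  have e1 : (∏ i, x i) ^ (1 / (n : ℝ)) = ∏ i, x i ^ (1 / (n : ℝ)) :=
    (Real.finset_prod_rpow univ x (fun i _ => h0 i) _).symm
  have e2 : (∏ i, (1 - x i)) ^ (1 / (n : ℝ)) = ∏ i, (1 - x i) ^ (1 / (n : ℝ)) :=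
    (Real.finset_prod_rpow univ (fun i => 1 - x i) (fun i _ => by linarith [h1 i]) _).symm
  have g1 := Real.geom_mean_le_arith_mean_weighted univ (fun _ => 1 / (n:ℝ)) x hw hw'
    (fun i _ => h0 i)
  have g2 := Real.geom_mean_le_arith_mean_weighted univ (fun _ => 1 / (n:ℝ)) (fun i => 1 - x i)
    hw hw' (fun i _ => by linarith [h1 i])
  have hsum : (∑ i, (1 / (n:ℝ)) * x i) + ∑ i, (1 / (n:ℝ)) * (1 - x i) = 1 := by
    rw [← Finset.sum_add_distrib]
    have : ∀ i : Fin n, (1 / (n:ℝ)) * x i + (1 / (n:ℝ)) * (1 - x i) = 1 / (n:ℝ) := by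
      intro i; ring
    simp only [this]
    simpa using hw'
  rw [e1, e2]
  calc (∏ i, x i ^ (1 / (n : ℝ))) + ∏ i, (1 - x i) ^ (1 / (n : ℝ))
      ≤ (∑ i, (1 / (n:ℝ)) * x i) + ∑ i, (1 / (n:ℝ)) * (1 - x i) := add_le_add g1 g2
    _ = 1 := hsum

lemma psd_det_nonneg {n : ℕ} {M : Matrix (Fin n) (Fin n) ℝ} (hM : M.PosSemidef) :
    0 ≤ M.det := by
  rw [hM.isHermitian.det_eq_prod_eigenvalues]
  exact Finset.prod_nonneg fun i _ => by simpa using hM.eigenvalues_nonneg i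

theorem stmt1 (n : ℕ) (hn : 0 < n) (A B : Matrix (Fin n) (Fin n) ℝ)
    (hA : A.IsSymm) (hB : B.IsSymm)
    (hBpsd : B.PosSemidef) (hABpsd : (A - B).PosSemidef) :
    0 ≤ (A - B).det ∧
      (A - B).det ≤ (A.det ^ (1 / (n : ℝ)) - B.det ^ (1 / (n : ℝ))) ^ n := by
  have hn' : (n : ℝ) ≠ 0 := Nat.cast_ne_zero.mpr hn.ne'
  have hApsd : A.PosSemidef := by
    have := hABpsd.add hBpsd
    simpa using this
  refine ⟨psd_det_nonneg hABpsd, ?_⟩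
  by_cases hdetA : A.det = 0
  · -- degenerate case: A has nontrivial kernel, so do B and A - B
    obtain ⟨v, hv, hAv⟩ := (Matrix.exists_mulVec_eq_zero_iff).mpr hdetA
    have hsum : star v ⬝ᵥ B *ᵥ v + star v ⬝ᵥ (A - B) *ᵥ v = 0 := by
      have : star v ⬝ᵥ A *ᵥ v = 0 := by rw [hAv, dotProduct_zero]
      rw [← this, Matrix.sub_mulVec]
      simp [dotProduct_sub]
    have h1 : (0:ℝ) ≤ star v ⬝ᵥ B *ᵥ v := by simpa using hBpsd.dotProduct_mulVec_nonneg v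
    have h2 : (0:ℝ) ≤ star v ⬝ᵥ (A - B) *ᵥ v := by simpa using hABpsd.dotProduct_mulVec_nonneg v
    have hBv : B *ᵥ v = 0 := (hBpsd.dotProduct_mulVec_zero_iff v).mp (by linarith)
    have hABv : (A - B) *ᵥ v = 0 := (hABpsd.dotProduct_mulVec_zero_iff v).mp (by linarith)
    have hdetB : B.det = 0 := (Matrix.exists_mulVec_eq_zero_iff).mp ⟨v, hv, hBv⟩
    have hdetAB : (A - B).det = 0 := (Matrix.exists_mulVec_eq_zero_iff).mp ⟨v, hv, hABv⟩
    rw [hdetAB, hdetA, hdetB, Real.zero_rpow (by positivity), sub_zero]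
    positivity
  · -- A is positive definite (psd with nonzero det)
    have hdetApos : 0 < A.det := lt_of_le_of_ne (psd_det_nonneg hApsd) (Ne.symm hdetA)
    open scoped MatrixOrder in set C := CFC.sqrt A with hC
    open scoped MatrixOrder in have hCpsd : C.PosSemidef := (CFC.sqrt_nonneg A).posSemidef
    open scoped MatrixOrder in have hCC : C * C = A := CFC.sqrt_mul_sqrt_self A hApsd.nonneg
    have hdetC : C.det ≠ 0 := by
      intro h
      apply hdetA
      rw [← hCC, Matrix.det_mul, h, mul_zero]
    have hCunit : IsUnit C.det := isUnit_iff_ne_zero.mpr hdetC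
    have hCinv : C⁻¹ * C = 1 := Matrix.nonsing_inv_mul C hCunit
    have hCinv' : C * C⁻¹ = 1 := Matrix.mul_nonsing_inv C hCunit
    have hCherm : C.IsHermitian := hCpsd.isHermitian
    have hCinvherm : (C⁻¹)ᴴ = C⁻¹ := by
      rw [Matrix.conjTranspose_nonsing_inv, hCherm.eq]
    set M := C⁻¹ * (A - B) * C⁻¹ with hM
    set N := C⁻¹ * B * C⁻¹ with hN
    have hMpsd : M.PosSemidef := by
      have := hABpsd.mul_mul_conjTranspose_same C⁻¹
      rwa [hCinvherm] at this
    have hNpsd : N.PosSemidef := by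
      have := hBpsd.mul_mul_conjTranspose_same C⁻¹
      rwa [hCinvherm] at this
    have hMN : M + N = 1 := by
      rw [hM, hN]
      have : C⁻¹ * (A - B) * C⁻¹ + C⁻¹ * B * C⁻¹ = C⁻¹ * A * C⁻¹ := by
        noncomm_ring
      rw [this, ← hCC, ← Matrix.mul_assoc, Matrix.mul_assoc _ C C⁻¹, hCinv', Matrix.mul_one, hCinv]
    have hNeq : N = 1 - M := by rw [← hMN]; abel
    -- determinants
    have hdA : A.det = C.det * C.det := by rw [← hCC, Matrix.det_mul]
    have h2 : C⁻¹.det * C.det = 1 := by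
      rw [← Matrix.det_mul, hCinv, Matrix.det_one]
    have hdetM : (A - B).det = A.det * M.det := by
      rw [hM, Matrix.det_mul, Matrix.det_mul, hdA]
      linear_combination (-(A - B).det * (C⁻¹.det * C.det + 1)) * h2
    have hdetN : B.det = A.det * N.det := by
      rw [hN, Matrix.det_mul, Matrix.det_mul, hdA]
      linear_combination (-B.det * (C⁻¹.det * C.det + 1)) * h2
    -- eigenvalues of M
    have hMherm := hMpsd.isHermitian
    set μ := hMherm.eigenvalues with hμ
    have hμ0 : ∀ i, 0 ≤ μ i := fun i => hMpsd.eigenvalues_nonneg i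
    -- 1 - M is psd, so eigenvalues of M are ≤ 1
    have hdiag : (star (hMherm.eigenvectorUnitary : Matrix (Fin n) (Fin n) ℝ)) * M *
        (hMherm.eigenvectorUnitary : Matrix (Fin n) (Fin n) ℝ) =
        Matrix.diagonal (RCLike.ofReal ∘ μ) := by
          have := hMherm.conjStarAlgAut_star_eigenvectorUnitary
          rwa [Unitary.conjStarAlgAut_star_apply] at this
    set U := (hMherm.eigenvectorUnitary : Matrix (Fin n) (Fin n) ℝ) with hU
    have hUU : (star U) * U = 1 :=
      Matrix.mem_unitaryGroup_iff'.mp (hMherm.eigenvectorUnitary).2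
    have hUU' : U * (star U) = 1 :=
      Matrix.mem_unitaryGroup_iff.mp (hMherm.eigenvectorUnitary).2
    have hconj : (star U) * N * U = Matrix.diagonal (fun i => 1 - μ i) := by
      rw [hNeq, Matrix.mul_sub, Matrix.sub_mul, Matrix.mul_one, hUU, hdiag]
      rw [← Matrix.diagonal_one, Matrix.diagonal_sub]
      rfl
    have hdiagpsd : (Matrix.diagonal (fun i => 1 - μ i)).PosSemidef := by
      rw [← hconj]
      have := hNpsd.conjTranspose_mul_mul_same U
      simpa [Matrix.star_eq_conjTranspose] using this
    have hμ1 : ∀ i, μ i ≤ 1 := by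
      intro i
      have := Matrix.posSemidef_diagonal_iff.mp hdiagpsd i
      linarith
    -- det M and det N as products of eigenvalues
    have hdetMμ : M.det = ∏ i, μ i := by
      have := hMherm.det_eq_prod_eigenvalues
      simpa using this
    have hdetNμ : N.det = ∏ i, (1 - μ i) := by
      have h1 : ((star U) * N * U).det = N.det := by
        rw [Matrix.det_mul, Matrix.det_mul, mul_comm ((star U).det), mul_assoc, ← Matrix.det_mul,
          hUU, Matrix.det_one, mul_one]
      rw [← h1, hconj, Matrix.det_diagonal]
    -- key inequality
    have hkey : M.det ^ (1 / (n:ℝ)) + N.det ^ (1 / (n:ℝ)) ≤ 1 := by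
      rw [hdetMμ, hdetNμ]
      exact key_scalar n hn μ hμ0 hμ1
    have hdetMnn : 0 ≤ M.det := psd_det_nonneg hMpsd
    have hdetNnn : 0 ≤ N.det := psd_det_nonneg hNpsd
    -- assemble
    have hrhs : A.det ^ (1 / (n:ℝ)) - B.det ^ (1 / (n:ℝ)) =
        A.det ^ (1 / (n:ℝ)) * (1 - N.det ^ (1 / (n:ℝ))) := by
      rw [hdetN, Real.mul_rpow (le_of_lt hdetApos) hdetNnn]
      ring
    rw [hrhs, hdetM, mul_pow]
    have hApow : (A.det ^ (1 / (n:ℝ))) ^ n = A.det := by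
      rw [← Real.rpow_natCast (A.det ^ (1 / (n:ℝ))) n, ← Real.rpow_mul (le_of_lt hdetApos)]
      rw [one_div, inv_mul_cancel₀ hn', Real.rpow_one]
    rw [hApow]
    apply mul_le_mul_of_nonneg_left _ (le_of_lt hdetApos)
    have hMle : M.det ^ (1 / (n:ℝ)) ≤ 1 - N.det ^ (1 / (n:ℝ)) := by linarith
    have hMpow : (M.det ^ (1 / (n:ℝ))) ^ n = M.det := by
      rw [← Real.rpow_natCast (M.det ^ (1 / (n:ℝ))) n, ← Real.rpow_mul hdetMnn]
      rw [one_div, inv_mul_cancel₀ hn', Real.rpow_one]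
    calc M.det = (M.det ^ (1 / (n:ℝ))) ^ n := hMpow.symm
      _ ≤ (1 - N.det ^ (1 / (n:ℝ))) ^ n :=
          pow_le_pow_left₀ (Real.rpow_nonneg hdetMnn _) hMle n
end

section
/- The map M ↦ (det M)^{1/n} is concave on the cone of n×n real symmetric positive semidefinite matrices: for all such A, B and t ∈ [0,1], (det(tA + (1-t)B))^{1/n} ≥ t(det A)^{1/n} + (1-t)(det B)^{1/n}. -/
open Matrix Finset

variable {n : ℕ}

lemma myTraceEq {A : Matrix (Fin n) (Fin n) ℝ} (hA : A.IsHermitian) :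
    A.trace = ∑ i, hA.eigenvalues i := by
  nth_rewrite 1 [hA.spectral_theorem]
  rw [Unitary.conjStarAlgAut_apply]
  rw [Matrix.trace_mul_cycle]
  rw [Matrix.mul_assoc] at *
  rw [show (star (hA.eigenvectorUnitary : Matrix (Fin n) (Fin n) ℝ)) * ((hA.eigenvectorUnitary : Matrix (Fin n) (Fin n) ℝ) * diagonal (RCLike.ofReal ∘ hA.eigenvalues)) = diagonal (RCLike.ofReal ∘ hA.eigenvalues) by rw [← Matrix.mul_assoc, (Matrix.mem_unitaryGroup_iff').mp hA.eigenvectorUnitary.2, Matrix.one_mul], Matrix.trace_diagonal]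
  simp

lemma myDetNonneg {A : Matrix (Fin n) (Fin n) ℝ} (hA : A.PosSemidef) : 0 ≤ A.det := by
  rw [hA.1.det_eq_prod_eigenvalues]
  exact Finset.prod_nonneg fun i _ => by simpa using hA.eigenvalues_nonneg i

lemma mySmul {A : Matrix (Fin n) (Fin n) ℝ} (hA : A.PosSemidef) {t : ℝ} (ht : 0 ≤ t) :
    (t • A).PosSemidef := by
  refine Matrix.PosSemidef.of_dotProduct_mulVec_nonneg ?_ ?_
  · unfold Matrix.IsHermitian
    rw [conjTranspose_smul, hA.1.eq]
    simp
  · intro x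
    rw [smul_mulVec, dotProduct_smul, smul_eq_mul]
    exact mul_nonneg ht (hA.dotProduct_mulVec_nonneg x)

lemma myDetRpowLeTrace (hn : 0 < n) {M : Matrix (Fin n) (Fin n) ℝ} (hM : M.PosSemidef) :
    M.det ^ (1/(n:ℝ)) ≤ M.trace / n := by
  have hnR : (0:ℝ) < n := by exact_mod_cast hn
  have key := Real.geom_mean_le_arith_mean_weighted Finset.univ (fun _ => 1/(n:ℝ))
    (fun i => hM.1.eigenvalues i) (fun i _ => by positivity)
    (by simp; field_simp) (fun i _ => hM.eigenvalues_nonneg i)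
  calc M.det ^ (1/(n:ℝ)) = (∏ i, hM.1.eigenvalues i) ^ (1/(n:ℝ)) := by
        rw [hM.1.det_eq_prod_eigenvalues]; norm_num
    _ = ∏ i, (hM.1.eigenvalues i) ^ (1/(n:ℝ)) :=
        (Real.finset_prod_rpow _ _ (fun i _ => hM.eigenvalues_nonneg i) _).symm
    _ ≤ ∑ i, (1/(n:ℝ)) * hM.1.eigenvalues i := key
    _ = M.trace / n := by rw [← Finset.mul_sum, myTraceEq hM.1]; ring

open scoped MatrixOrder in
lemma mySuperadd (hn : 0 < n) {A B : Matrix (Fin n) (Fin n) ℝ}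
    (hA : A.PosSemidef) (hB : B.PosSemidef) :
    A.det ^ (1/(n:ℝ)) + B.det ^ (1/(n:ℝ)) ≤ (A + B).det ^ (1/(n:ℝ)) := by
  have hnR : (0:ℝ) < n := by exact_mod_cast hn
  have hn1 : (1/(n:ℝ)) ≠ 0 := by positivity
  have hAB := hA.add hB
  by_cases hdet : (A+B).det = 0
  · obtain ⟨v, hv, hv0⟩ := (Matrix.exists_mulVec_eq_zero_iff).mpr hdet
    have h0 : star v ⬝ᵥ (A+B) *ᵥ v = 0 := by rw [hv0, dotProduct_zero]
    rw [add_mulVec, dotProduct_add] at h0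
    have hAv : star v ⬝ᵥ A *ᵥ v = 0 :=
      le_antisymm (by linarith [hB.dotProduct_mulVec_nonneg v]) (hA.dotProduct_mulVec_nonneg v)
    have hBv : star v ⬝ᵥ B *ᵥ v = 0 := by linarith
    have hdA : A.det = 0 := Matrix.exists_mulVec_eq_zero_iff.mp
      ⟨v, hv, (hA.dotProduct_mulVec_zero_iff v).mp hAv⟩
    have hdB : B.det = 0 := Matrix.exists_mulVec_eq_zero_iff.mp
      ⟨v, hv, (hB.dotProduct_mulVec_zero_iff v).mp hBv⟩
    rw [hdA, hdB, hdet, Real.zero_rpow hn1]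
    norm_num
  · set S := CFC.sqrt (A + B) with hSdef
    have hS : S.PosSemidef := (CFC.sqrt_nonneg _).posSemidef
    have hSS : S * S = A + B := CFC.sqrt_mul_sqrt_self _ hAB.nonneg
    have hdetS : S.det ≠ 0 := by
      intro h
      apply hdet
      rw [← hSS, Matrix.det_mul, h, mul_zero]
    have hU : IsUnit S.det := isUnit_iff_ne_zero.mpr hdetS
    set T := S⁻¹ with hTdef
    have hTS : T * S = 1 := Matrix.nonsing_inv_mul S hU
    have hST : S * T = 1 := Matrix.mul_nonsing_inv S hU
    have hTH : Tᴴ = T := by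
      rw [hTdef, Matrix.conjTranspose_nonsing_inv, hS.1.eq]
    have hA' : (T * A * T).PosSemidef := by
      have := hA.mul_mul_conjTranspose_same T
      rwa [hTH] at this
    have hB' : (T * B * T).PosSemidef := by
      have := hB.mul_mul_conjTranspose_same T
      rwa [hTH] at this
    have hsum : T * A * T + T * B * T = 1 := by
      have : T * A * T + T * B * T = T * (A + B) * T := by
        noncomm_ring
      rw [this, ← hSS, ← Matrix.mul_assoc, Matrix.mul_assoc (T * S), hTS, hST, Matrix.one_mul]
    have htr : (T * A * T).trace + (T * B * T).trace = n := by
      rw [← Matrix.trace_add, hsum, Matrix.trace_one]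
      simp
    set D := (A+B).det with hD
    have hDpos : 0 < D := lt_of_le_of_ne (myDetNonneg hAB) (Ne.symm hdet)
    have hTS1 : T.det * S.det = 1 := by rw [← Matrix.det_mul, hTS, Matrix.det_one]
    have hSD : S.det * S.det = D := by rw [← Matrix.det_mul, hSS]
    have hdetT : T.det * T.det * D = 1 := by
      rw [← hSD]
      linear_combination (T.det * S.det + 1) * hTS1
    have hdA' : (T * A * T).det = A.det / D := by
      rw [Matrix.det_mul, Matrix.det_mul]
      field_simp
      linear_combination A.det * hdetT
    have hdB' : (T * B * T).det = B.det / D := by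
      rw [Matrix.det_mul, Matrix.det_mul]
      field_simp
      linear_combination B.det * hdetT
    have k1 := myDetRpowLeTrace hn hA'
    have k2 := myDetRpowLeTrace hn hB'
    rw [hdA'] at k1
    rw [hdB'] at k2
    have hkey : (A.det / D) ^ (1/(n:ℝ)) + (B.det / D) ^ (1/(n:ℝ)) ≤ 1 := by
      have : ((T * A * T).trace + (T * B * T).trace) / n = 1 := by
        rw [htr]; field_simp
      calc (A.det / D) ^ (1/(n:ℝ)) + (B.det / D) ^ (1/(n:ℝ))
          ≤ (T * A * T).trace / n + (T * B * T).trace / n := add_le_add k1 k2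
        _ = 1 := by rw [← add_div, this]
    have hdiv : ∀ x : ℝ, 0 ≤ x → (x / D) ^ (1/(n:ℝ)) = x ^ (1/(n:ℝ)) / D ^ (1/(n:ℝ)) :=
      fun x hx => Real.div_rpow hx (le_of_lt hDpos) _
    rw [hdiv _ (myDetNonneg hA), hdiv _ (myDetNonneg hB), ← add_div,
      div_le_one (Real.rpow_pos_of_pos hDpos _)] at hkey
    exact hkey

theorem stmt2 (n : ℕ) (hn : 0 < n) (A B : Matrix (Fin n) (Fin n) ℝ)
    (hA : A.IsSymm) (hB : B.IsSymm)
    (hApsd : A.PosSemidef) (hBpsd : B.PosSemidef)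
    (t : ℝ) (ht : t ∈ Set.Icc (0 : ℝ) 1) :
    t * A.det ^ (1 / (n : ℝ)) + (1 - t) * B.det ^ (1 / (n : ℝ)) ≤
      (t • A + (1 - t) • B).det ^ (1 / (n : ℝ)) := by
  obtain ⟨ht0, ht1⟩ := ht
  have ht1' : (0:ℝ) ≤ 1 - t := by linarith
  have hnR : (0:ℝ) < n := by exact_mod_cast hn
  have hsmul : ∀ (s : ℝ), 0 ≤ s → ∀ (M : Matrix (Fin n) (Fin n) ℝ), M.PosSemidef →
      (s • M).det ^ (1/(n:ℝ)) = s * M.det ^ (1/(n:ℝ)) := by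
    intro s hs M hM
    rw [Matrix.det_smul, Fintype.card_fin]
    rw [Real.mul_rpow (pow_nonneg hs n) (myDetNonneg hM)]
    congr 1
    rw [← Real.rpow_natCast s n, ← Real.rpow_mul hs]
    rw [show (n:ℝ) * (1/(n:ℝ)) = 1 by field_simp]
    exact Real.rpow_one s
  have key := mySuperadd hn (mySmul hApsd ht0) (mySmul hBpsd ht1')
  rwa [hsmul t ht0 A hApsd, hsmul (1-t) ht1' B hBpsd] at key
end

section
/- Let u : Ω → ℝ be a convex function on a convex open set Ω ⊂ ℝⁿ. Then the set of vectors p ∈ ℝⁿ that belong to the subdifferential of u at two distinct points of Ω has Lebesgue measure zero. -/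
open Set MeasureTheory

lemma subgrad_fderiv {E : Type*} [NormedAddCommGroup E] [InnerProductSpace ℝ E]
    {f : E → ℝ} {p x : E} (hd : DifferentiableAt ℝ f p)
    (hx : ∀ q, f p + (inner ℝ x (q - p) : ℝ) ≤ f q) :
    ∀ v, fderiv ℝ f p v = (inner ℝ x v : ℝ) := by
  set g : E → ℝ := fun q => f q - (inner ℝ x q : ℝ) with hg
  have hdg : DifferentiableAt ℝ g p :=
    hd.sub ((innerSL ℝ x).differentiableAt)
  have hmin : IsLocalMin g p := by
    apply IsMinOn.isLocalMin (s := Set.univ)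
    · intro q _
      have := hx q
      simp only [inner_sub_right] at this
      simp only [hg]
      dsimp
      linarith
    · exact Filter.univ_mem
  have h0 : fderiv ℝ g p = 0 := hmin.fderiv_eq_zero
  intro v
  have heq : fderiv ℝ g p = fderiv ℝ f p - innerSL ℝ x := by
    have h1 : fderiv ℝ (fun q => f q - (innerSL ℝ x) q) p
        = fderiv ℝ f p - fderiv ℝ (innerSL ℝ x) p :=
      fderiv_fun_sub hd ((innerSL ℝ x).differentiableAt)
    rw [(innerSL ℝ x).fderiv] at h1
    exact h1
  rw [heq] at h0
  have := congrArg (fun L : _ →L[ℝ] ℝ => L v) h0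
  simp only [ContinuousLinearMap.sub_apply, ContinuousLinearMap.zero_apply] at this
  have h2 : (fderiv ℝ f p) v - (innerSL ℝ x) v = 0 := this
  simp only [innerSL_apply_apply] at h2
  linarith

theorem stmt7 (n : ℕ) (Ω : Set (EuclideanSpace ℝ (Fin n)))
    (hΩo : IsOpen Ω) (hΩc : Convex ℝ Ω)
    (u : EuclideanSpace ℝ (Fin n) → ℝ) (hu : ConvexOn ℝ Ω u) :
    volume {p : EuclideanSpace ℝ (Fin n) | ∃ x ∈ Ω, ∃ y ∈ Ω, x ≠ y ∧
        (∀ z ∈ Ω, u x + (inner ℝ p (z - x) : ℝ) ≤ u z) ∧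
        (∀ z ∈ Ω, u y + (inner ℝ p (z - y) : ℝ) ≤ u z)} = 0 := by
  set T : ℕ → Set (EuclideanSpace ℝ (Fin n)) := fun m => {z | z ∈ Ω ∧ ‖z‖ ≤ m ∧ -(m : ℝ) ≤ u z} with hT
  set f : ℕ → EuclideanSpace ℝ (Fin n) → ℝ := fun m p => sSup ((fun z => (inner ℝ p z : ℝ) - u z) '' T m) with hf
  have hbdd : ∀ m p, BddAbove ((fun z => (inner ℝ p z : ℝ) - u z) '' T m) := by
    intro m p
    refine ⟨‖p‖ * m + m, ?_⟩
    rintro a ⟨z, ⟨hzΩ, hzn, hzu⟩, rfl⟩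
    have h1 : (inner ℝ p z : ℝ) ≤ ‖p‖ * ‖z‖ := real_inner_le_norm p z
    have h2 : ‖p‖ * ‖z‖ ≤ ‖p‖ * m :=
      mul_le_mul_of_nonneg_left hzn (norm_nonneg p)
    show (inner ℝ p z : ℝ) - u z ≤ ‖p‖ * m + m
    linarith
  have key : ∀ m p q, f m p ≤ f m q + m * ‖p - q‖ := by
    intro m p q
    rcases (T m).eq_empty_or_nonempty with h | ⟨z0, hz0⟩
    · simp [hf, h, Real.sSup_empty]
      positivity
    · apply csSup_le (Set.Nonempty.image _ ⟨z0, hz0⟩)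
      rintro a ⟨z, hz, rfl⟩
      have h1 : (inner ℝ q z : ℝ) - u z ≤ f m q :=
        le_csSup (hbdd m q) (Set.mem_image_of_mem _ hz)
      have h2 : (inner ℝ p z : ℝ) - (inner ℝ q z : ℝ) = inner ℝ (p - q) z := by
        rw [inner_sub_left]
      have h3 : (inner ℝ (p - q) z : ℝ) ≤ ‖p - q‖ * ‖z‖ := real_inner_le_norm _ _
      have h4 : ‖p - q‖ * ‖z‖ ≤ ‖p - q‖ * m :=
        mul_le_mul_of_nonneg_left hz.2.1 (norm_nonneg _)
      show (inner ℝ p z : ℝ) - u z ≤ f m q + m * ‖p - q‖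
      nlinarith [norm_nonneg (p - q)]
  have hlip : ∀ m : ℕ, LipschitzWith (m : NNReal) (f m) := by
    intro m
    apply LipschitzWith.of_dist_le_mul
    intro p q
    rw [Real.dist_eq, abs_sub_le_iff]
    constructor
    · have := key m p q
      rw [dist_eq_norm]
      push_cast
      linarith
    · have := key m q p
      rw [dist_comm, dist_eq_norm]
      push_cast
      linarith
  have hsub : {p : EuclideanSpace ℝ (Fin n) | ∃ x ∈ Ω, ∃ y ∈ Ω, x ≠ y ∧
        (∀ z ∈ Ω, u x + (inner ℝ p (z - x) : ℝ) ≤ u z) ∧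
        (∀ z ∈ Ω, u y + (inner ℝ p (z - y) : ℝ) ≤ u z)} ⊆
      ⋃ m : ℕ, {p : EuclideanSpace ℝ (Fin n) | ¬ DifferentiableAt ℝ (f m) p} := by
    rintro p ⟨x, hxΩ, y, hyΩ, hxy, hpx, hpy⟩
    set m := ⌈max (max ‖x‖ ‖y‖) (max (-u x) (-u y))⌉₊ with hm
    have hle : max (max ‖x‖ ‖y‖) (max (-u x) (-u y)) ≤ (m : ℝ) := Nat.le_ceil _
    have hxT : x ∈ T m := by
      refine ⟨hxΩ, ?_, ?_⟩
      · calc ‖x‖ ≤ _ := le_max_left _ _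
          _ ≤ _ := le_trans (le_max_left _ _) hle
      · have : -u x ≤ (m : ℝ) :=
          le_trans (le_trans (le_max_left _ _) (le_max_right _ _)) hle
        linarith
    have hyT : y ∈ T m := by
      refine ⟨hyΩ, ?_, ?_⟩
      · calc ‖y‖ ≤ _ := le_max_right _ _
          _ ≤ _ := le_trans (le_max_left _ _) hle
      · have : -u y ≤ (m : ℝ) :=
          le_trans (le_trans (le_max_right _ _) (le_max_right _ _)) hle
        linarith
    have hval : ∀ w : EuclideanSpace ℝ (Fin n), w ∈ T m → (∀ z ∈ Ω, u w + (inner ℝ p (z - w) : ℝ) ≤ u z) →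
        f m p = (inner ℝ p w : ℝ) - u w := by
      intro w hwT hw
      apply le_antisymm
      · apply csSup_le (Set.Nonempty.image _ ⟨w, hwT⟩)
        rintro a ⟨z, hz, rfl⟩
        have := hw z hz.1
        rw [inner_sub_right] at this
        show (inner ℝ p z : ℝ) - u z ≤ (inner ℝ p w : ℝ) - u w
        linarith
      · exact le_csSup (hbdd m p) (Set.mem_image_of_mem _ hwT)
    have hsg : ∀ w : EuclideanSpace ℝ (Fin n), w ∈ T m → (∀ z ∈ Ω, u w + (inner ℝ p (z - w) : ℝ) ≤ u z) →
        ∀ q, f m p + (inner ℝ w (q - p) : ℝ) ≤ f m q := by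
      intro w hwT hw q
      have h1 : (inner ℝ q w : ℝ) - u w ≤ f m q :=
        le_csSup (hbdd m q) (Set.mem_image_of_mem _ hwT)
      rw [hval w hwT hw, inner_sub_right]
      have hc1 := real_inner_comm q w
      have hc2 := real_inner_comm p w
      linarith
    apply Set.mem_iUnion.2 ⟨m, ?_⟩
    intro hdiff
    have hA := subgrad_fderiv hdiff (hsg x hxT hpx)
    have hB := subgrad_fderiv hdiff (hsg y hyT hpy)
    apply hxy
    clear hdiff
    have hxyv : ∀ v : EuclideanSpace ℝ (Fin n), (inner ℝ x v : ℝ) = inner ℝ y v := fun v => (hA v).symm.trans (hB v)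
    have := hxyv (x - y)
    rw [← sub_eq_zero, ← inner_sub_left] at this
    have h0 : x - y = 0 := by
      rwa [inner_self_eq_zero (𝕜 := ℝ)] at this
    exact sub_eq_zero.1 h0
  apply measure_mono_null hsub
  apply measure_iUnion_null
  intro m
  have := (hlip m).ae_differentiableAt (μ := volume)
  rw [MeasureTheory.ae_iff] at this
  simpa using this
end

section
/- Let (X, μ) and (Y, ν) be finite measure spaces, T_k, T : X → Y measurable maps with (T_k)_#(f_k μ) = g_k ν and T_#(f μ) = g ν, where λ ≤ f_k, f ≤ Λ and λ ≤ g_k, g ≤ Λ for some 0 < λ ≤ Λ. If g ∘ T_k → g ∘ T in L¹(X, μ) and g_k → g in L¹(Y, ν), then g_k ∘ T_k → g ∘ T in L¹(X, μ). -/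
open Set Filter Topology MeasureTheory
open scoped ENNReal

private lemma aux_int {X : Type*} [MeasurableSpace X] (μ : Measure X) [IsFiniteMeasure μ]
    {h : X → ℝ} (hm : Measurable h) (B : ℝ) (hb : ∀ x, |h x| ≤ B) : Integrable h μ :=
  (integrable_const B).mono' hm.aestronglyMeasurable (ae_of_all _ hb)

theorem stmt9 {X Y : Type*} [MeasurableSpace X] [MeasurableSpace Y]
    (μ : Measure X) (ν : Measure Y) [IsFiniteMeasure μ] [IsFiniteMeasure ν]
    (T : ℕ → X → Y) (T₀ : X → Y)
    (hT : ∀ k, Measurable (T k)) (hT₀ : Measurable T₀)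
    (f : ℕ → X → ℝ) (f₀ : X → ℝ) (g : ℕ → Y → ℝ) (g₀ : Y → ℝ)
    (hf : ∀ k, Measurable (f k)) (hf₀ : Measurable f₀)
    (hg : ∀ k, Measurable (g k)) (hg₀ : Measurable g₀)
    (lam Lam : ℝ) (hlam : 0 < lam) (hlamLam : lam ≤ Lam)
    (hfb : ∀ k x, lam ≤ f k x ∧ f k x ≤ Lam) (hf₀b : ∀ x, lam ≤ f₀ x ∧ f₀ x ≤ Lam)
    (hgb : ∀ k y, lam ≤ g k y ∧ g k y ≤ Lam) (hg₀b : ∀ y, lam ≤ g₀ y ∧ g₀ y ≤ Lam)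
    (hpush : ∀ k, (μ.withDensity (fun x => ENNReal.ofReal (f k x))).map (T k)
        = ν.withDensity (fun y => ENNReal.ofReal (g k y)))
    (hpush₀ : (μ.withDensity (fun x => ENNReal.ofReal (f₀ x))).map T₀
        = ν.withDensity (fun y => ENNReal.ofReal (g₀ y)))
    (hgT : Tendsto (fun k => ∫ x, |g₀ (T k x) - g₀ (T₀ x)| ∂μ) atTop (𝓝 0))
    (hgg : Tendsto (fun k => ∫ y, |g k y - g₀ y| ∂ν) atTop (𝓝 0)) :
    Tendsto (fun k => ∫ x, |g k (T k x) - g₀ (T₀ x)| ∂μ) atTop (𝓝 0) := by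
  have hLam : 0 < Lam := lt_of_lt_of_le hlam hlamLam
  -- bounds on |g k y - g₀ y|
  have hgbnd : ∀ k y, |g k y - g₀ y| ≤ 2 * Lam := by
    intro k y
    have h1 := hgb k y; have h2 := hg₀b y
    rw [abs_sub_le_iff]; constructor <;> nlinarith [hlam.le.trans hlamLam]
  -- key estimate via pushforward
  have key : ∀ k, ∫ x, |g k (T k x) - g₀ (T k x)| ∂μ
      ≤ (Lam / lam) * ∫ y, |g k y - g₀ y| ∂ν := by
    intro k
    set φ : Y → ℝ≥0∞ := fun y => ENNReal.ofReal |g k y - g₀ y| with hφdef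
    have hφm : Measurable φ := (((hg k).sub hg₀).abs).ennreal_ofReal
    have hfkm : Measurable fun x => ENNReal.ofReal (f k x) := (hf k).ennreal_ofReal
    have hgkm : Measurable fun y => ENNReal.ofReal (g k y) := (hg k).ennreal_ofReal
    have hA : ENNReal.ofReal lam * ∫⁻ x, φ (T k x) ∂μ
        ≤ ENNReal.ofReal Lam * ∫⁻ y, φ y ∂ν := by
      calc ENNReal.ofReal lam * ∫⁻ x, φ (T k x) ∂μ
          = ∫⁻ x, ENNReal.ofReal lam * φ (T k x) ∂μ := (lintegral_const_mul _ (hφm.comp (hT k))).symm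
        _ ≤ ∫⁻ x, ENNReal.ofReal (f k x) * φ (T k x) ∂μ := by
            refine lintegral_mono fun x => ?_
            exact mul_le_mul_left (ENNReal.ofReal_le_ofReal (hfb k x).1) _
        _ = ∫⁻ x, ((fun x => ENNReal.ofReal (f k x)) * fun x => φ (T k x)) x ∂μ := rfl
        _ = ∫⁻ x, φ (T k x) ∂(μ.withDensity fun x => ENNReal.ofReal (f k x)) :=
            (lintegral_withDensity_eq_lintegral_mul μ hfkm (hφm.comp (hT k))).symm
        _ = ∫⁻ y, φ y ∂((μ.withDensity fun x => ENNReal.ofReal (f k x)).map (T k)) :=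
            (lintegral_map hφm (hT k)).symm
        _ = ∫⁻ y, φ y ∂(ν.withDensity fun y => ENNReal.ofReal (g k y)) := by rw [hpush k]
        _ = ∫⁻ y, ((fun y => ENNReal.ofReal (g k y)) * φ) y ∂ν :=
            lintegral_withDensity_eq_lintegral_mul ν hgkm hφm
        _ = ∫⁻ y, ENNReal.ofReal (g k y) * φ y ∂ν := rfl
        _ ≤ ∫⁻ y, ENNReal.ofReal Lam * φ y ∂ν := by
            refine lintegral_mono fun y => ?_
            exact mul_le_mul_left (ENNReal.ofReal_le_ofReal (hgb k y).2) _
        _ = ENNReal.ofReal Lam * ∫⁻ y, φ y ∂ν := lintegral_const_mul _ hφm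
    -- finiteness
    have hBfin : ∫⁻ y, φ y ∂ν < ⊤ := by
      calc ∫⁻ y, φ y ∂ν ≤ ∫⁻ _, ENNReal.ofReal (2 * Lam) ∂ν :=
            lintegral_mono fun y => ENNReal.ofReal_le_ofReal (hgbnd k y)
        _ = ENNReal.ofReal (2 * Lam) * ν univ := by simp [lintegral_const]
        _ < ⊤ := ENNReal.mul_lt_top ENNReal.ofReal_lt_top (measure_lt_top ν _)
    have hAfin : ∫⁻ x, φ (T k x) ∂μ < ⊤ := by
      calc ∫⁻ x, φ (T k x) ∂μ ≤ ∫⁻ _, ENNReal.ofReal (2 * Lam) ∂μ :=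
            lintegral_mono fun x => ENNReal.ofReal_le_ofReal (hgbnd k (T k x))
        _ = ENNReal.ofReal (2 * Lam) * μ univ := by simp [lintegral_const]
        _ < ⊤ := ENNReal.mul_lt_top ENNReal.ofReal_lt_top (measure_lt_top μ _)
    -- pass to reals
    have hIl : ∫ x, |g k (T k x) - g₀ (T k x)| ∂μ = (∫⁻ x, φ (T k x) ∂μ).toReal := by
      rw [integral_eq_lintegral_of_nonneg_ae (f := fun x => |g k (T k x) - g₀ (T k x)|) (ae_of_all _ fun x => abs_nonneg _)
        ((((hg k).sub hg₀).abs.comp (hT k)).aestronglyMeasurable)]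
    have hIr : ∫ y, |g k y - g₀ y| ∂ν = (∫⁻ y, φ y ∂ν).toReal := by
      rw [integral_eq_lintegral_of_nonneg_ae (f := fun y => |g k y - g₀ y|) (ae_of_all _ fun y => abs_nonneg _)
        ((((hg k).sub hg₀).abs).aestronglyMeasurable)]
    have hreal : lam * (∫⁻ x, φ (T k x) ∂μ).toReal ≤ Lam * (∫⁻ y, φ y ∂ν).toReal := by
      have := ENNReal.toReal_mono (by
        exact ENNReal.mul_ne_top ENNReal.ofReal_ne_top hBfin.ne) hA
      rwa [ENNReal.toReal_mul, ENNReal.toReal_mul, ENNReal.toReal_ofReal hlam.le,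
        ENNReal.toReal_ofReal hLam.le] at this
    rw [hIl, hIr, div_mul_eq_mul_div, le_div_iff₀ hlam]
    linarith [hreal]
  -- triangle inequality
  have htri : ∀ k, ∫ x, |g k (T k x) - g₀ (T₀ x)| ∂μ
      ≤ (Lam / lam) * (∫ y, |g k y - g₀ y| ∂ν) + ∫ x, |g₀ (T k x) - g₀ (T₀ x)| ∂μ := by
    intro k
    have hb1 : ∀ y z : Y, |g k y - g₀ z| ≤ 2 * Lam := by
      intro y z
      have h1 := hgb k y; have h2 := hg₀b z
      rw [abs_sub_le_iff]; constructor <;> nlinarith [hlam.le.trans hlamLam]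
    have hb2 : ∀ y z : Y, |g₀ y - g₀ z| ≤ 2 * Lam := by
      intro y z
      have h1 := hg₀b y; have h2 := hg₀b z
      rw [abs_sub_le_iff]; constructor <;> nlinarith [hlam.le.trans hlamLam]
    have i1 : Integrable (fun x => |g k (T k x) - g₀ (T₀ x)|) μ :=
      aux_int μ (((hg k).comp (hT k)).sub (hg₀.comp hT₀)).abs (2 * Lam)
        (fun x => by simpa using hb1 (T k x) (T₀ x))
    have i2 : Integrable (fun x => |g k (T k x) - g₀ (T k x)|) μ :=
      aux_int μ ((((hg k).sub hg₀).abs).comp (hT k)) (2 * Lam)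
        (fun x => by simpa using hgbnd k (T k x))
    have i3 : Integrable (fun x => |g₀ (T k x) - g₀ (T₀ x)|) μ :=
      aux_int μ ((hg₀.comp (hT k)).sub (hg₀.comp hT₀)).abs (2 * Lam)
        (fun x => by simpa using hb2 (T k x) (T₀ x))
    calc ∫ x, |g k (T k x) - g₀ (T₀ x)| ∂μ
        ≤ ∫ x, (|g k (T k x) - g₀ (T k x)| + |g₀ (T k x) - g₀ (T₀ x)|) ∂μ := by
          refine integral_mono i1 (i2.add i3) fun x => ?_
          exact abs_sub_le _ _ _
      _ = (∫ x, |g k (T k x) - g₀ (T k x)| ∂μ) + ∫ x, |g₀ (T k x) - g₀ (T₀ x)| ∂μ :=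
          integral_add i2 i3
      _ ≤ (Lam / lam) * (∫ y, |g k y - g₀ y| ∂ν) + ∫ x, |g₀ (T k x) - g₀ (T₀ x)| ∂μ := by
          linarith [key k]
  -- squeeze
  have hlim : Tendsto (fun k => (Lam / lam) * (∫ y, |g k y - g₀ y| ∂ν)
      + ∫ x, |g₀ (T k x) - g₀ (T₀ x)| ∂μ) atTop (𝓝 0) := by
    have := (hgg.const_mul (Lam / lam)).add hgT
    simpa using this
  exact squeeze_zero (fun k => integral_nonneg fun x => abs_nonneg _) htri hlim
end
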